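/- Let a > 0, γ > 0, and x real. Define the associated Charlier polynomials 𝓒_n(x; a, γ) by the recurrence a·𝓒_{n+1} = (n + γ + a − x)·𝓒_n − (n+γ)·𝓒_{n−1}, with 𝓒_{−1} = 0, 𝓒_0 = 1. Then for all n ≥ 0, the convolution formula holds: n!·𝓒_n(x; a, γ) / (γ+1)_n = Σ_{k=0}^n C(n,k) · [γ(−1)^k/(γ+k)] · C_{n−k}(x; a) · C_k(−x−1; −a), where C_m(y; b) = Σ_{j=0}^m [(−m)_j (−y)_j / j!] (−1/b)^j are the Charlier polynomials and C(n,k) is the binomial coefficient. -/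

import Mathlib

/-- Pochhammer symbol (rising factorial) of a real number. -/
noncomputable def poch (a : ℝ) (k : ℕ) : ℝ := ∏ i ∈ Finset.range k, (a + i)

/-- Charlier polynomials \(C_n(x;a)\). -/
noncomputable def charlier (a x : ℝ) (n : ℕ) : ℝ :=
  ∑ k ∈ Finset.range (n + 1),
    poch (-(n : ℝ)) k * poch (-x) k / (Nat.factorial k) * (-1 / a) ^ k

/-- The associated Charlier polynomials, defined by their three-term recurrence
(with association parameter γ and the convention 𝓒₋₁ = 0, 𝓒₀ = 1). -/
def IsAssocCharlier (a γ : ℝ) (C : ℕ → ℝ → ℝ) : Prop :=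
  (∀ x, C 0 x = 1) ∧
  (∀ x, a * C 1 x = γ + a - x) ∧
  (∀ x, ∀ n : ℕ,
    a * C (n + 2) x =
      ((n : ℝ) + 1 + γ + a - x) * C (n + 1) x - ((n : ℝ) + 1 + γ) * C n x)

open Finset

/-- falling factorial -/
noncomputable def ffall (y : ℝ) (k : ℕ) : ℝ := ∏ i ∈ Finset.range k, (y - i)

lemma charlier_eq_sum (b y : ℝ) (n : ℕ) :
    charlier b y n = ∑ k ∈ range (n+1), (n.choose k : ℝ) * ffall y k * (-1/b)^k := by
  unfold charlier
  refine Finset.sum_congr rfl (fun k hk => ?_)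
  have hk' : k ≤ n := Finset.mem_range_succ_iff.mp hk
  have h1 : poch (-(n:ℝ)) k = (-1)^k * (n.descFactorial k : ℝ) := by
    rw [Nat.descFactorial_eq_prod_range]
    unfold poch
    push_cast [Nat.cast_prod]
    have : ∀ i ∈ range k, (-(n:ℝ) + i) = (-1) * ((n:ℝ) - i) := fun i _ => by ring
    rw [Finset.prod_congr rfl this, Finset.prod_mul_distrib, Finset.prod_const]
    congr 1
    · simp
    · refine Finset.prod_congr rfl (fun i hi => ?_)
      have hi' : i < k := Finset.mem_range.mp hi
      rw [Nat.cast_sub (by omega)]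
  have h2 : poch (-y) k = (-1)^k * ffall y k := by
    unfold poch ffall
    have : ∀ i ∈ range k, (-y + (i:ℝ)) = (-1) * (y - i) := fun i _ => by ring
    rw [Finset.prod_congr rfl this, Finset.prod_mul_distrib, Finset.prod_const]
    simp
  rw [h1, h2, Nat.descFactorial_eq_factorial_mul_choose]
  push_cast
  have hf : (Nat.factorial k : ℝ) ≠ 0 := by positivity
  have h3 : ((-1:ℝ))^k = 1 ∨ ((-1:ℝ))^k = -1 := by
    rcases Nat.even_or_odd k with h | h
    · exact Or.inl (Even.neg_one_pow h)
    · exact Or.inr (Odd.neg_one_pow h)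
  rcases h3 with h3 | h3 <;> simp only [h3] <;>
    rw [div_mul_eq_mul_div, div_eq_iff hf] <;> ring
lemma pascal_sum (n : ℕ) (g : ℕ → ℝ) :
    ∑ k ∈ range (n+2), ((n+1).choose k : ℝ) * g k
      = ∑ k ∈ range (n+2), (n.choose k : ℝ) * g k
        + ∑ k ∈ range (n+1), (n.choose k : ℝ) * g (k+1) := by
  rw [Finset.sum_range_succ' (fun k => ((n+1).choose k : ℝ) * g k) (n+1),
      Finset.sum_range_succ' (fun k => ((n).choose k : ℝ) * g k) (n+1)]
  have h : ∀ k ∈ range (n+1), (((n+1).choose (k+1) : ℝ)) * g (k+1)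
      = ((n.choose (k+1) : ℝ) * g (k+1) + (n.choose k : ℝ) * g (k+1)) := by
    intro k _
    rw [Nat.choose_succ_succ]
    push_cast
    ring
  rw [Finset.sum_congr rfl h, Finset.sum_add_distrib]
  simp only [Nat.choose_zero_right, Nat.cast_one]
  ring

lemma drop_top (n : ℕ) (g : ℕ → ℝ) :
    ∑ k ∈ range (n+2), (n.choose k : ℝ) * g k = ∑ k ∈ range (n+1), (n.choose k : ℝ) * g k := by
  rw [Finset.sum_range_succ (fun k => ((n).choose k : ℝ) * g k) (n+1)]
  simp [Nat.choose_succ_self]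

lemma choose_weight_sum (m : ℕ) (f : ℕ → ℝ) :
    ∑ k ∈ range (m+1), (m.choose k : ℝ) * (((m:ℝ) - k) * f k)
      = m * ∑ k ∈ range (m-1+1), ((m-1).choose k : ℝ) * f k := by
  cases m with
  | zero => simp
  | succ p =>
    simp only [Nat.add_sub_cancel]
    have h1 : ∀ k ∈ range (p+2), (((p+1).choose k : ℝ)) * (((((p+1):ℕ):ℝ) - k) * f k)
        = (((p+1):ℕ):ℝ) * ((p.choose k : ℝ) * f k) := by
      intro k hk
      have hk' : k ≤ p+1 := Finset.mem_range_succ_iff.mp hk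
      have hc := congrArg (Nat.cast : ℕ → ℝ) (Nat.choose_mul_succ_eq p k)
      push_cast [Nat.cast_sub hk'] at hc
      push_cast
      linear_combination (-(f k)) * hc
    rw [Finset.sum_congr rfl h1, ← Finset.mul_sum, drop_top p f]

lemma charlier_rec (b y : ℝ) (hb : b ≠ 0) (m : ℕ) :
    b * charlier b y (m+1) = ((m:ℝ) + b - y) * charlier b y m - (m:ℝ) * charlier b y (m-1) := by
  have key := choose_weight_sum m (fun k => ffall y k * (-1/b)^k)
  rw [charlier_eq_sum, charlier_eq_sum, charlier_eq_sum]
  simp only [mul_assoc]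
  rw [pascal_sum m (fun k => ffall y k * (-1/b)^k), drop_top m (fun k => ffall y k * (-1/b)^k),
    mul_add]
  have h2 : b * ∑ k ∈ range (m+1), (m.choose k:ℝ) * (ffall y (k+1) * (-1/b)^(k+1))
      = ∑ k ∈ range (m+1), (m.choose k:ℝ) * (((k:ℝ) - y) * (ffall y k * (-1/b)^k)) := by
    rw [Finset.mul_sum]
    refine Finset.sum_congr rfl fun k _ => ?_
    have hf : ffall y (k+1) = ffall y k * (y - k) := by rw [ffall, ffall, Finset.prod_range_succ]
    rw [hf, pow_succ]
    field_simp
    ring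
  rw [h2]
  have h3 : ∑ k ∈ range (m+1), (m.choose k:ℝ) * (((k:ℝ) - y) * (ffall y k * (-1/b)^k))
      = ((m:ℝ) - y) * ∑ k ∈ range (m+1), (m.choose k:ℝ) * (ffall y k * (-1/b)^k)
        - (m:ℝ) * ∑ k ∈ range (m-1+1), ((m-1).choose k:ℝ) * (ffall y k * (-1/b)^k) := by
    rw [← key, Finset.mul_sum, ← Finset.sum_sub_distrib]
    exact Finset.sum_congr rfl fun k _ => by ring
  rw [h3]
  ring
section Conv

variable {a x γ : ℝ} {u v : ℕ → ℝ}

/-- binomial convolution sum -/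
noncomputable def GS (u v : ℕ → ℝ) (n : ℕ) : ℝ :=
  ∑ k ∈ range (n+1), (n.choose k : ℝ) * ((-1:ℝ)^k * (u (n-k) * v k))

/-- weighted binomial convolution sum -/
noncomputable def MS (u v : ℕ → ℝ) (γ : ℝ) (j n : ℕ) : ℝ :=
  ∑ k ∈ range (n+1), (n.choose k : ℝ) *
    ((-1:ℝ)^k * (u (n-k) * v k * (γ/(γ+(k:ℝ)+(j:ℝ)))))

lemma G_rec (hu : ∀ m, a * u (m+1) = ((m:ℝ) + a - x) * u m - m * u (m-1))
    (hv : ∀ k, a * v (k+1) = (a - k - x - 1) * v k + k * v (k-1)) (n : ℕ) :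
    a * GS u v (n+1) = ((n:ℝ)+1) * GS u v n := by
  unfold GS
  rw [pascal_sum n (fun k => (-1:ℝ)^k * (u (n+1-k) * v k)),
      drop_top n (fun k => (-1:ℝ)^k * (u (n+1-k) * v k)),
      mul_add, Finset.mul_sum, Finset.mul_sum]
  have h1 : ∀ k ∈ range (n+1), a * ((n.choose k : ℝ) * ((-1:ℝ)^k * (u (n+1-k) * v k)))
      = (n.choose k : ℝ) * ((-1:ℝ)^k * ((((n:ℝ)-k) + a - x) * (u (n-k) * v k)))
        - (n.choose k : ℝ) * ((-1:ℝ)^k * (((n:ℝ)-k) * (u (n-k-1) * v k))) := by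
    intro k hk
    have hk' : k ≤ n := Finset.mem_range_succ_iff.mp hk
    have e1 : n+1-k = (n-k)+1 := by omega
    have e2 : ((n-k:ℕ):ℝ) = (n:ℝ) - k := Nat.cast_sub hk'
    rw [e1]
    have hrec := hu (n-k)
    rw [e2] at hrec
    linear_combination ((n.choose k:ℝ) * (-1:ℝ)^k * v k) * hrec
  have h2 : ∀ k ∈ range (n+1), a * ((n.choose k : ℝ) * ((-1:ℝ)^(k+1) * (u (n+1-(k+1)) * v (k+1))))
      = - ((n.choose k : ℝ) * ((-1:ℝ)^k * ((a - k - x - 1) * (u (n-k) * v k))))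
        - ((n.choose k : ℝ) * ((-1:ℝ)^k * ((k:ℝ) * (u (n-k) * v (k-1))))) := by
    intro k _
    have e1 : n+1-(k+1) = n-k := by omega
    rw [e1]
    have hrec := hv k
    linear_combination ((n.choose k:ℝ) * (-1:ℝ)^(k+1) * u (n-k)) * hrec
  rw [Finset.sum_congr rfl h1, Finset.sum_congr rfl h2, Finset.sum_sub_distrib,
      Finset.sum_sub_distrib]
  -- name the four sums
  have h3 : (∑ k ∈ range (n+1), (n.choose k : ℝ) * ((-1:ℝ)^k * ((((n:ℝ)-k) + a - x) * (u (n-k) * v k))))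
      + (∑ k ∈ range (n+1), - ((n.choose k : ℝ) * ((-1:ℝ)^k * ((a - k - x - 1) * (u (n-k) * v k)))))
      = ((n:ℝ)+1) * ∑ k ∈ range (n+1), (n.choose k : ℝ) * ((-1:ℝ)^k * (u (n-k) * v k)) := by
    rw [← Finset.sum_add_distrib, Finset.mul_sum]
    exact Finset.sum_congr rfl fun k _ => by ring
  have h4 : (∑ k ∈ range (n+1), (n.choose k : ℝ) * ((-1:ℝ)^k * (((n:ℝ)-k) * (u (n-k-1) * v k))))
      = ∑ k ∈ range n, (n.choose k : ℝ) * ((-1:ℝ)^k * (((n:ℝ)-k) * (u (n-k-1) * v k))) := by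
    rw [Finset.sum_range_succ]
    simp
  have h5 : (∑ k ∈ range (n+1), (n.choose k : ℝ) * ((-1:ℝ)^k * ((k:ℝ) * (u (n-k) * v (k-1)))))
      = - ∑ k ∈ range n, (n.choose k : ℝ) * ((-1:ℝ)^k * (((n:ℝ)-k) * (u (n-k-1) * v k))) := by
    rw [Finset.sum_range_succ' (fun k => (n.choose k : ℝ) * ((-1:ℝ)^k * ((k:ℝ) * (u (n-k) * v (k-1))))) n]
    simp only [Nat.cast_zero, zero_mul, mul_zero, add_zero, pow_zero]
    rw [← Finset.sum_neg_distrib]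
    refine Finset.sum_congr rfl fun k hk => ?_
    have hk' : k < n := Finset.mem_range.mp hk
    have e1 : n-(k+1) = n-k-1 := by omega
    have e2 : (k+1)-1 = k := by omega
    have hc := congrArg (Nat.cast : ℕ → ℝ) (Nat.choose_succ_right_eq n k)
    have e3 : ((n-k:ℕ):ℝ) = (n:ℝ)-k := Nat.cast_sub (le_of_lt hk')
    push_cast [e3] at hc
    rw [e1, e2]
    push_cast
    linear_combination ((-1:ℝ)^(k+1) * (u (n-k-1) * v k)) * hc
  linarith [h3, h4, h5]

lemma M_rec2 (hne : ∀ (k j : ℕ), γ + (k:ℝ) + (j:ℝ) ≠ 0)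
    (hu : ∀ m, a * u (m+1) = ((m:ℝ) + a - x) * u m - m * u (m-1))
    (hv : ∀ k, a * v (k+1) = (a - k - x - 1) * v k + k * v (k-1)) (n j : ℕ) :
    a * MS u v γ j (n+2)
      = ((n:ℝ)+1+(a-x)+γ+j) * MS u v γ j (n+1) - ((a-x)+γ+j) * MS u v γ (j+1) (n+1)
        + ((n:ℝ)+1) * MS u v γ (j+2) n - ((n:ℝ)+1) * MS u v γ j n := by
  unfold MS
  rw [pascal_sum (n+1) (fun k => (-1:ℝ)^k * (u (n+2-k) * v k * (γ/(γ+(k:ℝ)+(j:ℝ))))),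
      drop_top (n+1) (fun k => (-1:ℝ)^k * (u (n+2-k) * v k * (γ/(γ+(k:ℝ)+(j:ℝ))))),
      mul_add, Finset.mul_sum, Finset.mul_sum]
  have h1 : ∀ k ∈ range (n+2),
      a * (((n+1).choose k : ℝ) * ((-1:ℝ)^k * (u (n+2-k) * v k * (γ/(γ+(k:ℝ)+(j:ℝ))))))
      = ((n+1).choose k : ℝ) * ((-1:ℝ)^k * ((((n:ℝ)+1-k) + a - x) * (u (n+1-k) * v k * (γ/(γ+(k:ℝ)+(j:ℝ))))))
        - ((n+1).choose k : ℝ) * ((-1:ℝ)^k * (((n:ℝ)+1-k) * (u (n+1-k-1) * v k * (γ/(γ+(k:ℝ)+(j:ℝ)))))) := by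
    intro k hk
    have hk' : k ≤ n+1 := Finset.mem_range_succ_iff.mp hk
    have e1 : n+2-k = (n+1-k)+1 := by omega
    have e2 : ((n+1-k:ℕ):ℝ) = (n:ℝ)+1-k := by
      rw [Nat.cast_sub hk']; push_cast; ring
    rw [e1]
    have hrec := hu (n+1-k)
    rw [e2] at hrec
    linear_combination (((n+1).choose k:ℝ) * (-1:ℝ)^k * (v k * (γ/(γ+(k:ℝ)+(j:ℝ))))) * hrec
  have h2 : ∀ k ∈ range (n+2),
      a * (((n+1).choose k : ℝ) * ((-1:ℝ)^(k+1) * (u (n+2-(k+1)) * v (k+1) * (γ/(γ+((k+1:ℕ):ℝ)+(j:ℝ))))))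
      = - (((n+1).choose k : ℝ) * ((-1:ℝ)^k * ((a - k - x - 1) * (u (n+1-k) * v k * (γ/(γ+(k:ℝ)+((j+1:ℕ):ℝ)))))))
        - (((n+1).choose k : ℝ) * ((-1:ℝ)^k * ((k:ℝ) * (u (n+1-k) * v (k-1) * (γ/(γ+(k:ℝ)+((j+1:ℕ):ℝ))))))) := by
    intro k _
    have e1 : n+2-(k+1) = n+1-k := by omega
    rw [e1]
    have hrec := hv k
    push_cast
    linear_combination (((n+1).choose k:ℝ) * (-1:ℝ)^(k+1) * (u (n+1-k) * (γ/(γ+(k:ℝ)+(j:ℝ)+1)))) * hrec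
  rw [Finset.sum_congr rfl h1, Finset.sum_congr rfl h2, Finset.sum_sub_distrib,
      Finset.sum_sub_distrib]
  have h3 : (∑ k ∈ range (n+2), ((n+1).choose k : ℝ) * ((-1:ℝ)^k * ((((n:ℝ)+1-k) + a - x) * (u (n+1-k) * v k * (γ/(γ+(k:ℝ)+(j:ℝ)))))))
      + (∑ k ∈ range (n+2), - (((n+1).choose k : ℝ) * ((-1:ℝ)^k * ((a - k - x - 1) * (u (n+1-k) * v k * (γ/(γ+(k:ℝ)+((j+1:ℕ):ℝ))))))))
      = ((n:ℝ)+1+(a-x)+γ+j) * (∑ k ∈ range (n+2), ((n+1).choose k : ℝ) * ((-1:ℝ)^k * (u (n+1-k) * v k * (γ/(γ+(k:ℝ)+(j:ℝ))))))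
        - ((a-x)+γ+j) * (∑ k ∈ range (n+2), ((n+1).choose k : ℝ) * ((-1:ℝ)^k * (u (n+1-k) * v k * (γ/(γ+(k:ℝ)+((j+1:ℕ):ℝ)))))) := by
    rw [← Finset.sum_add_distrib, Finset.mul_sum, Finset.mul_sum, ← Finset.sum_sub_distrib]
    refine Finset.sum_congr rfl fun k _ => ?_
    have w1 : (k:ℝ) * (γ/(γ+(k:ℝ)+(j:ℝ))) = γ - (γ+(j:ℝ)) * (γ/(γ+(k:ℝ)+(j:ℝ))) := by
      have d1 := hne k j
      field_simp
      ring
    have w2 : (k:ℝ) * (γ/(γ+(k:ℝ)+((j:ℝ)+1))) = γ - (γ+(j:ℝ)+1) * (γ/(γ+(k:ℝ)+((j:ℝ)+1))) := by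
      have d2 := hne k (j+1)
      push_cast at d2
      field_simp
      ring
    push_cast
    linear_combination (-((((n+1).choose k : ℝ)) * (u (n+1-k) * v k) * (-1:ℝ)^k)) * w1
      + ((((n+1).choose k : ℝ)) * (u (n+1-k) * v k) * (-1:ℝ)^k) * w2
  have h4 : (∑ k ∈ range (n+2), ((n+1).choose k : ℝ) * ((-1:ℝ)^k * (((n:ℝ)+1-k) * (u (n+1-k-1) * v k * (γ/(γ+(k:ℝ)+(j:ℝ)))))))
      = ((n:ℝ)+1) * ∑ k ∈ range (n+1), (n.choose k : ℝ) * ((-1:ℝ)^k * (u (n-k) * v k * (γ/(γ+(k:ℝ)+(j:ℝ))))) := by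
    rw [Finset.sum_range_succ]
    have htop : ((n:ℝ)+1-(((n+1):ℕ):ℝ)) = 0 := by push_cast; ring
    rw [htop]
    simp only [zero_mul, mul_zero, add_zero]
    rw [Finset.mul_sum]
    refine Finset.sum_congr rfl fun k hk => ?_
    have hk' : k ≤ n := Finset.mem_range_succ_iff.mp hk
    have e1 : n+1-k-1 = n-k := by omega
    have hc := congrArg (Nat.cast : ℕ → ℝ) (Nat.choose_mul_succ_eq n k)
    push_cast [Nat.cast_sub (show k ≤ n+1 by omega)] at hc
    rw [e1]
    linear_combination (-((-1:ℝ)^k * (u (n-k) * v k * (γ/(γ+(k:ℝ)+(j:ℝ)))))) * hc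
  have h5 : (∑ k ∈ range (n+2), ((n+1).choose k : ℝ) * ((-1:ℝ)^k * ((k:ℝ) * (u (n+1-k) * v (k-1) * (γ/(γ+(k:ℝ)+((j+1:ℕ):ℝ)))))))
      = -(((n:ℝ)+1) * ∑ k ∈ range (n+1), (n.choose k : ℝ) * ((-1:ℝ)^k * (u (n-k) * v k * (γ/(γ+(k:ℝ)+((j+2:ℕ):ℝ)))))) := by
    rw [Finset.sum_range_succ' (fun k => ((n+1).choose k : ℝ) * ((-1:ℝ)^k * ((k:ℝ) * (u (n+1-k) * v (k-1) * (γ/(γ+(k:ℝ)+((j+1:ℕ):ℝ))))))) (n+1)]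
    simp only [Nat.cast_zero, zero_mul, mul_zero, add_zero, pow_zero]
    rw [Finset.mul_sum, ← Finset.sum_neg_distrib]
    refine Finset.sum_congr rfl fun k hk => ?_
    have hk' : k ≤ n := Finset.mem_range_succ_iff.mp hk
    have e1 : n+1-(k+1) = n-k := by omega
    have e2 : (k+1)-1 = k := by omega
    have hc := congrArg (Nat.cast : ℕ → ℝ) (Nat.add_one_mul_choose_eq n k)
    push_cast at hc
    rw [e1, e2]
    push_cast
    linear_combination ((-1:ℝ)^k * (u (n-k) * v k * (γ/(γ+(k:ℝ)+(j:ℝ)+2)))) * hc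
  linarith [h3, h4, h5]

lemma M_rec1 (hne : ∀ (k j : ℕ), γ + (k:ℝ) + (j:ℝ) ≠ 0)
    (hu : ∀ m, a * u (m+1) = ((m:ℝ) + a - x) * u m - m * u (m-1))
    (hv : ∀ k, a * v (k+1) = (a - k - x - 1) * v k + k * v (k-1)) (n j : ℕ) :
    a * (γ+(j:ℝ)) * MS u v γ j (n+2)
      = ((n:ℝ)+2) * ((a-x)+γ+j) * MS u v γ (j+1) (n+1)
        - ((n:ℝ)+2)*((n:ℝ)+1) * MS u v γ (j+2) n := by
  set Q : ℝ := ∑ k ∈ range (n+3), ((n+2).choose k : ℝ) *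
      ((-1:ℝ)^k * (u (n+2-k) * v k * ((k:ℝ) * (γ/(γ+(k:ℝ)+(j:ℝ)))))) with hQ
  set R : ℝ := ∑ k ∈ range (n+2), ((n+1).choose k : ℝ) *
      ((-1:ℝ)^k * (u (n+1-k) * (v (k+1) * (γ/(γ+(k:ℝ)+((j+1:ℕ):ℝ)))))) with hR
  have hQA : Q = γ * GS u v (n+2) - (γ+(j:ℝ)) * MS u v γ j (n+2) := by
    rw [hQ]
    unfold GS MS
    rw [Finset.mul_sum, Finset.mul_sum, ← Finset.sum_sub_distrib]
    refine Finset.sum_congr rfl fun k _ => ?_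
    have w1 : (k:ℝ) * (γ/(γ+(k:ℝ)+(j:ℝ))) = γ - (γ+(j:ℝ)) * (γ/(γ+(k:ℝ)+(j:ℝ))) := by
      have d1 := hne k j
      field_simp
      ring
    linear_combination ((((n+2).choose k : ℝ)) * ((-1:ℝ)^k * (u (n+2-k) * v k))) * w1
  have hQB : Q = -((n:ℝ)+2) * R := by
    rw [hQ, hR, Finset.sum_range_succ' (fun k => ((n+2).choose k : ℝ) *
      ((-1:ℝ)^k * (u (n+2-k) * v k * ((k:ℝ) * (γ/(γ+(k:ℝ)+(j:ℝ))))))) (n+2)]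
    simp only [Nat.cast_zero, zero_mul, mul_zero, add_zero, pow_zero]
    rw [Finset.mul_sum]
    refine Finset.sum_congr rfl fun k hk => ?_
    have e1 : n+2-(k+1) = n+1-k := by omega
    have hc := congrArg (Nat.cast : ℕ → ℝ) (Nat.add_one_mul_choose_eq (n+1) k)
    simp only [Nat.succ_eq_add_one, show n+1+1 = n+2 from by omega] at hc
    push_cast at hc
    rw [e1]
    push_cast
    linear_combination ((-1:ℝ)^k * (u (n+1-k) * (v (k+1) * (γ/(γ+(k:ℝ)+(j:ℝ)+1))))) * hc
  have hC : a * R = ((a-x)+γ+(j:ℝ)) * MS u v γ (j+1) (n+1) - γ * GS u v (n+1)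
      - ((n:ℝ)+1) * MS u v γ (j+2) n := by
    rw [hR, Finset.mul_sum]
    have h1 : ∀ k ∈ range (n+2),
        a * (((n+1).choose k : ℝ) * ((-1:ℝ)^k * (u (n+1-k) * (v (k+1) * (γ/(γ+(k:ℝ)+((j+1:ℕ):ℝ)))))))
        = ((n+1).choose k : ℝ) * ((-1:ℝ)^k * ((a - k - x - 1) * (u (n+1-k) * (v k * (γ/(γ+(k:ℝ)+((j+1:ℕ):ℝ)))))))
          + ((n+1).choose k : ℝ) * ((-1:ℝ)^k * ((k:ℝ) * (u (n+1-k) * (v (k-1) * (γ/(γ+(k:ℝ)+((j+1:ℕ):ℝ))))))) := by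
      intro k _
      have hrec := hv k
      push_cast
      linear_combination ((((n+1).choose k : ℝ)) * ((-1:ℝ)^k * (u (n+1-k) * (γ/(γ+(k:ℝ)+(j:ℝ)+1))))) * hrec
    rw [Finset.sum_congr rfl h1, Finset.sum_add_distrib]
    have h2 : (∑ k ∈ range (n+2), ((n+1).choose k : ℝ) *
          ((-1:ℝ)^k * ((a - k - x - 1) * (u (n+1-k) * (v k * (γ/(γ+(k:ℝ)+((j+1:ℕ):ℝ))))))))
        = ((a-x)+γ+(j:ℝ)) * MS u v γ (j+1) (n+1) - γ * GS u v (n+1) := by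
      unfold GS MS
      rw [Finset.mul_sum, Finset.mul_sum, ← Finset.sum_sub_distrib]
      refine Finset.sum_congr rfl fun k _ => ?_
      have w2 : (k:ℝ) * (γ/(γ+(k:ℝ)+((j:ℝ)+1))) = γ - (γ+(j:ℝ)+1) * (γ/(γ+(k:ℝ)+((j:ℝ)+1))) := by
        have d2 := hne k (j+1)
        push_cast at d2
        field_simp
        ring
      push_cast
      linear_combination (-((((n+1).choose k : ℝ)) * ((-1:ℝ)^k * (u (n+1-k) * v k)))) * w2
    have h3 : (∑ k ∈ range (n+2), ((n+1).choose k : ℝ) *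
          ((-1:ℝ)^k * ((k:ℝ) * (u (n+1-k) * (v (k-1) * (γ/(γ+(k:ℝ)+((j+1:ℕ):ℝ))))))))
        = - (((n:ℝ)+1) * MS u v γ (j+2) n) := by
      unfold MS
      rw [Finset.sum_range_succ' (fun k => ((n+1).choose k : ℝ) *
        ((-1:ℝ)^k * ((k:ℝ) * (u (n+1-k) * (v (k-1) * (γ/(γ+(k:ℝ)+((j+1:ℕ):ℝ)))))))) (n+1)]
      simp only [Nat.cast_zero, zero_mul, mul_zero, add_zero, pow_zero]
      rw [Finset.mul_sum, ← Finset.sum_neg_distrib]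
      refine Finset.sum_congr rfl fun k hk => ?_
      have e1 : n+1-(k+1) = n-k := by omega
      have e2 : (k+1)-1 = k := by omega
      have hc := congrArg (Nat.cast : ℕ → ℝ) (Nat.add_one_mul_choose_eq n k)
      push_cast at hc
      rw [e1, e2]
      push_cast
      linear_combination ((-1:ℝ)^k * (u (n-k) * (v k * (γ/(γ+(k:ℝ)+(j:ℝ)+2))))) * hc
    rw [h2, h3]
    ring
  have hG := G_rec hu hv (n+1)
  push_cast at hG
  have key : a * (γ * GS u v (n+2) - (γ+(j:ℝ)) * MS u v γ j (n+2)) = -((n:ℝ)+2) * (a * R) := by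
    rw [← hQA, hQB]
    ring
  linear_combination (-1 : ℝ)*key + ((n:ℝ)+2)*hC + γ*hG

lemma M_key (hne : ∀ (k j : ℕ), γ + (k:ℝ) + (j:ℝ) ≠ 0)
    (hu : ∀ m, a * u (m+1) = ((m:ℝ) + a - x) * u m - m * u (m-1))
    (hv : ∀ k, a * v (k+1) = (a - k - x - 1) * v k + k * v (k-1)) (n : ℕ) :
    a * (γ+(n:ℝ)+2) * MS u v γ 0 (n+2)
      = ((n:ℝ)+2) * ((n:ℝ)+1+γ+(a-x)) * MS u v γ 0 (n+1)
        - ((n:ℝ)+1)*((n:ℝ)+2) * MS u v γ 0 n := by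
  have h2 := M_rec2 hne hu hv n 0
  have h1 := M_rec1 hne hu hv n 0
  push_cast at h1 h2
  linear_combination ((n:ℝ)+2)*h2 + h1

lemma M_base (hne : ∀ (k j : ℕ), γ + (k:ℝ) + (j:ℝ) ≠ 0)
    (hu : ∀ m, a * u (m+1) = ((m:ℝ) + a - x) * u m - m * u (m-1))
    (hv : ∀ k, a * v (k+1) = (a - k - x - 1) * v k + k * v (k-1))
    (hu0 : u 0 = 1) (hv0 : v 0 = 1) :
    a * (γ+1) * MS u v γ 0 1 = γ + a - x := by
  have hγ0 : γ ≠ 0 := by have := hne 0 0; push_cast at this; simpa using this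
  have hγ1 : γ + 1 ≠ 0 := by have := hne 1 0; push_cast at this; simpa using this
  have e1 : a * u 1 = a - x := by
    have := hu 0
    push_cast at this
    rw [hu0] at this
    linarith [this]
  have e2 : a * v 1 = a - x - 1 := by
    have := hv 0
    push_cast at this
    rw [hv0] at this
    linarith [this]
  unfold MS
  rw [Finset.sum_range_succ, Finset.sum_range_succ, Finset.sum_range_zero]
  simp only [Nat.choose_self, Nat.choose_zero_right, Nat.cast_one, Nat.cast_zero, Nat.cast_ofNat,
    pow_zero, pow_one, zero_add, hu0, hv0]
  have eg : γ / (γ + 0 + 0) = 1 := by rw [add_zero, add_zero, div_self hγ0]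
  rw [eg]
  simp only [Nat.sub_zero]
  field_simp
  have hinv : (1+γ)*(1+γ)⁻¹ = 1 := mul_inv_cancel₀ (by rwa [add_comm])
  linear_combination (1+γ) * e1 + (-γ) * e2 + (-a*γ*v 1) * hinv

lemma M_zero (hne : ∀ (k j : ℕ), γ + (k:ℝ) + (j:ℝ) ≠ 0)
    (hu0 : u 0 = 1) (hv0 : v 0 = 1) : MS u v γ 0 0 = 1 := by
  have hγ0 : γ ≠ 0 := by have := hne 0 0; push_cast at this; simpa using this
  unfold MS
  rw [Finset.sum_range_succ, Finset.sum_range_zero]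
  simp [hu0, hv0]
  exact hγ0

end Conv

lemma poch_succ' (b : ℝ) (m : ℕ) : poch b (m+1) = poch b m * (b + m) := by
  rw [poch, poch, Finset.prod_range_succ]

lemma charlier_zero (b y : ℝ) : charlier b y 0 = 1 := by
  unfold charlier
  rw [Finset.sum_range_succ, Finset.sum_range_zero]
  simp [poch]


theorem assoc_charlier_convolution (a γ x : ℝ) (ha : 0 < a) (hγ : 0 < γ)
    (C : ℕ → ℝ → ℝ) (hC : IsAssocCharlier a γ C) (n : ℕ) :
    (Nat.factorial n : ℝ) * C n x / poch (γ + 1) n =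
      ∑ k ∈ Finset.range (n + 1),
        (n.choose k : ℝ) * (γ * (-1) ^ k / (γ + k)) *
          charlier a x (n - k) * charlier (-a) (-x - 1) k := by
  have ha' : a ≠ 0 := ne_of_gt ha
  set u : ℕ → ℝ := charlier a x with hu_def
  set v : ℕ → ℝ := charlier (-a) (-x-1) with hv_def
  have hu : ∀ m, a * u (m+1) = ((m:ℝ) + a - x) * u m - m * u (m-1) :=
    fun m => charlier_rec a x ha' m
  have hv : ∀ k, a * v (k+1) = (a - k - x - 1) * v k + k * v (k-1) := by
    intro k
    have h := charlier_rec (-a) (-x-1) (neg_ne_zero.mpr ha') k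
    linear_combination -h
  have hne : ∀ (k j : ℕ), γ + (k:ℝ) + (j:ℝ) ≠ 0 := by intro k j; positivity
  have hu0 : u 0 = 1 := charlier_zero a x
  have hv0 : v 0 = 1 := charlier_zero (-a) (-x-1)
  have hpoch : ∀ m, 0 < poch (γ+1) m := by
    intro m
    rw [poch]
    apply Finset.prod_pos
    intro i _
    positivity
  have key : ∀ m, (Nat.factorial m : ℝ) * C m x = poch (γ+1) m * MS u v γ 0 m := by
    intro m
    induction m using Nat.twoStepInduction with
    | zero =>
      rw [hC.1 x, M_zero hne hu0 hv0]
      simp [poch]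
    | one =>
      have hb := M_base hne hu hv hu0 hv0
      have hc1 := hC.2.1 x
      have hp1 : poch (γ+1) 1 = γ+1 := by
        rw [poch]; rw [Finset.prod_range_succ, Finset.prod_range_zero]; simp
      apply mul_left_cancel₀ ha'
      rw [hp1]
      simp only [Nat.factorial_one, Nat.cast_one]
      linear_combination hc1 - hb
    | more n ih1 ih2 =>
      have hrec := hC.2.2 x n
      have hM := M_key hne hu hv n
      have p1 : poch (γ+1) (n+1) = poch (γ+1) n * (γ+1+(n:ℝ)) := poch_succ' _ n
      have p2 : poch (γ+1) (n+2) = poch (γ+1) (n+1) * (γ+1+((n:ℝ)+1)) := by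
        have h := poch_succ' (γ+1) (n+1)
        push_cast at h
        exact h
      have f1 : ((Nat.factorial (n+1)) : ℝ) = ((n:ℝ)+1) * Nat.factorial n := by
        rw [Nat.factorial_succ]; push_cast; ring
      have f2 : ((Nat.factorial (n+2)) : ℝ) = ((n:ℝ)+2) * Nat.factorial (n+1) := by
        rw [show n+2 = (n+1)+1 from rfl, Nat.factorial_succ]; push_cast; ring
      rw [f1, p1] at ih2
      rw [f2, f1, p2, p1]
      apply mul_left_cancel₀ (show a * (γ+(n:ℝ)+2) ≠ 0 by positivity)
      linear_combination
        ((γ+(n:ℝ)+2)*((n:ℝ)+2)*((n:ℝ)+1)*(Nat.factorial n : ℝ)) * hrec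
        + (-(poch (γ+1) n * (γ+1+(n:ℝ)) * (γ+(n:ℝ)+2))) * hM
        + ((γ+(n:ℝ)+2)*((n:ℝ)+2)*((n:ℝ)+1+γ+(a-x))) * ih2
        + (-((γ+(n:ℝ)+2)*((n:ℝ)+2)*((n:ℝ)+1)*((n:ℝ)+1+γ))) * ih1
  have hS : (∑ k ∈ Finset.range (n + 1),
        (n.choose k : ℝ) * (γ * (-1) ^ k / (γ + k)) * u (n - k) * v k)
      = MS u v γ 0 n := by
    unfold MS
    refine Finset.sum_congr rfl fun k _ => ?_
    have hd := hne k 0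
    push_cast at hd ⊢
    ring
  rw [div_eq_iff (ne_of_gt (hpoch n)), hS]
  linear_combination key n
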